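/- Let (M, d) be a module equipped with an integer-valued metric d, and let ℙ*(M) be the set of equivalence classes of M (including the class of 0). Define δ([x],[y]) = inf { d(x', y') : x' ∈ [x], y' ∈ [y] } and Δ([x],[y]) = inf over all finite chains [x] = [x₀], [x₁], …, [xₙ] = [y] of the sum δ([x₀],[x₁]) + ⋯ + δ([x_{n−1}],[xₙ]). Then Δ is a metric on ℙ*(M): it is nonnegative, symmetric, satisfies the triangle inequality, and Δ([x],[y]) = 0 iff [x] = [y]. -/

import Mathlib

/-- The relation on all of `M` whose generated equivalence has the class of `0`
as a singleton and otherwise agrees with the common-divisor relation: this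
presents `ℙ*(M) = {*} ⊔ ℙ(M)`. -/
def relStar (R : Type*) {M : Type*} [CommRing R] [AddCommGroup M] [Module R M]
    (x y : M) : Prop :=
  (x = 0 ∧ y = 0) ∨
    (x ≠ 0 ∧ y ≠ 0 ∧ ∃ (m : M) (r s : R), x = r • m ∧ y = s • m)

/-- `ℙ*(M)`, the projective space of `M` together with the class `*` of `0`. -/
def ProjStar (R M : Type*) [CommRing R] [AddCommGroup M] [Module R M] :=
  Quot (relStar R (M := M))

theorem stmt_10 {R M : Type*} [CommRing R] [IsDomain R] [AddCommGroup M] [Module R M]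
    (d : M → M → ℤ)
    (hd_nonneg : ∀ x y, 0 ≤ d x y)
    (hd_eq : ∀ x y, d x y = 0 ↔ x = y)
    (hd_symm : ∀ x y, d x y = d y x)
    (hd_tri : ∀ x y z, d x z ≤ d x y + d y z)
    (δ Δ : ProjStar R M → ProjStar R M → ℤ)
    (hδ : ∀ P Q : ProjStar R M,
      IsLeast {t : ℤ | ∃ x y : M, Quot.mk _ x = P ∧ Quot.mk _ y = Q ∧ d x y = t}
        (δ P Q))
    (hΔ : ∀ P Q : ProjStar R M,
      IsLeast {t : ℤ | ∃ (n : ℕ) (c : Fin (n + 1) → ProjStar R M),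
          c 0 = P ∧ c (Fin.last n) = Q ∧
          t = ∑ i : Fin n, δ (c i.castSucc) (c i.succ)}
        (Δ P Q)) :
    (∀ P Q, 0 ≤ Δ P Q) ∧
    (∀ P Q, Δ P Q = Δ Q P) ∧
    (∀ P Q S, Δ P S ≤ Δ P Q + Δ Q S) ∧
    (∀ P Q, Δ P Q = 0 ↔ P = Q) := by
  -- δ is nonnegative
  have hδ_nonneg : ∀ P Q, 0 ≤ δ P Q := by
    intro P Q
    obtain ⟨x, y, -, -, hxy⟩ := (hδ P Q).1
    rw [← hxy]; exact hd_nonneg x y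
  -- δ is symmetric
  have hδ_symm : ∀ P Q, δ P Q = δ Q P := by
    have key : ∀ P Q : ProjStar R M, δ P Q ≤ δ Q P := by
      intro P Q
      obtain ⟨x, y, hx, hy, hxy⟩ := (hδ Q P).1
      exact (hδ P Q).2 ⟨y, x, hy, hx, (hd_symm y x).trans hxy⟩
    intro P Q; exact le_antisymm (key P Q) (key Q P)
  -- δ P Q = 0 implies P = Q
  have hδ_zero : ∀ P Q, δ P Q = 0 → P = Q := by
    intro P Q h
    obtain ⟨x, y, hx, hy, hxy⟩ := (hδ P Q).1
    rw [h] at hxy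
    rw [← hx, ← hy, (hd_eq x y).1 hxy]
  -- Δ is nonnegative
  have hΔ_nonneg : ∀ P Q, 0 ≤ Δ P Q := by
    intro P Q
    obtain ⟨n, c, -, -, hsum⟩ := (hΔ P Q).1
    rw [hsum]
    exact Finset.sum_nonneg fun i _ => hδ_nonneg _ _
  -- Δ P P ≤ 0 via the trivial chain
  have hΔ_refl : ∀ P, Δ P P = 0 := by
    intro P
    refine le_antisymm ((hΔ P P).2 ⟨0, fun _ => P, rfl, rfl, by simp⟩) (hΔ_nonneg P P)
  -- Δ is symmetric (reverse the chain)
  have hΔ_symm_le : ∀ P Q, Δ P Q ≤ Δ Q P := by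
    intro P Q
    obtain ⟨n, c, hc0, hcl, hsum⟩ := (hΔ Q P).1
    refine (hΔ P Q).2 ⟨n, fun i => c i.rev, ?_, ?_, ?_⟩
    · show c (0 : Fin (n+1)).rev = P
      rw [Fin.rev_zero, hcl]
    · show c (Fin.last n).rev = Q
      rw [Fin.rev_last, hc0]
    · rw [hsum]
      refine Fintype.sum_equiv Fin.revPerm _ _ fun i => ?_
      simp only [Fin.revPerm_apply, Fin.rev_castSucc, Fin.rev_succ, Fin.rev_rev]
      exact hδ_symm _ _
  have hΔ_symm : ∀ P Q, Δ P Q = Δ Q P := fun P Q =>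
    le_antisymm (hΔ_symm_le P Q) (hΔ_symm_le Q P)
  -- prepend one step: Δ P S ≤ δ P A + Δ A S
  have hΔ_cons : ∀ P A S, Δ P S ≤ δ P A + Δ A S := by
    intro P A S
    obtain ⟨n, c, hc0, hcl, hsum⟩ := (hΔ A S).1
    refine (hΔ P S).2 ⟨n + 1, Fin.cons P c, rfl, ?_, ?_⟩
    · rw [← Fin.succ_last, Fin.cons_succ, hcl]
    · rw [Fin.sum_univ_succ]
      simp only [Fin.castSucc_zero, Fin.cons_zero, ← Fin.succ_castSucc, Fin.cons_succ,
        hc0, hsum]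
  -- key induction for the triangle inequality
  have hchain : ∀ (S Q : ProjStar R M) (n : ℕ) (c : Fin (n + 1) → ProjStar R M),
      c (Fin.last n) = Q →
      Δ (c 0) S ≤ (∑ i : Fin n, δ (c i.castSucc) (c i.succ)) + Δ Q S := by
    intro S Q n
    induction n with
    | zero =>
      intro c hcl
      simpa [Fin.last] using le_of_eq (congrArg (fun X => Δ X S) (by simpa [Fin.last] using hcl))
    | succ n ih =>
      intro c hcl
      have h1 := hΔ_cons (c 0) (c 1) S
      have h2 := ih (fun i => c i.succ) (by simpa [Fin.succ_last] using hcl)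
      calc Δ (c 0) S ≤ δ (c 0) (c 1) + Δ (c 1) S := h1
        _ ≤ δ (c 0) (c 1) + ((∑ i : Fin n, δ (c i.castSucc.succ) (c i.succ.succ)) + Δ Q S) := by
            have : Δ ((fun i : Fin (n + 1) => c i.succ) 0) S ≤
                (∑ i : Fin n, δ ((fun i => c i.succ) i.castSucc) ((fun i => c i.succ) i.succ))
                + Δ Q S := h2
            simp only [Fin.succ_castSucc] at this ⊢
            exact add_le_add_right (by simpa using this) _
        _ = (∑ i : Fin (n+1), δ (c i.castSucc) (c i.succ)) + Δ Q S := by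
            rw [Fin.sum_univ_succ]
            simp only [Fin.succ_castSucc]
            ring_nf
            rw [show ((0 : Fin (n+1)).castSucc) = (0 : Fin (n+2)) from rfl,
              show ((0 : Fin (n+1)).succ) = (1 : Fin (n+2)) from rfl]
            ring
  -- triangle inequality
  have hΔ_tri : ∀ P Q S, Δ P S ≤ Δ P Q + Δ Q S := by
    intro P Q S
    obtain ⟨n, c, hc0, hcl, hsum⟩ := (hΔ P Q).1
    have := hchain S Q n c hcl
    rw [hc0] at this
    rw [hsum]
    exact this
  -- Δ P Q = 0 ↔ P = Q
  have hΔ_eq : ∀ P Q, Δ P Q = 0 ↔ P = Q := by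
    intro P Q
    constructor
    · intro h
      obtain ⟨n, c, hc0, hcl, hsum⟩ := (hΔ P Q).1
      rw [h] at hsum
      have hall : ∀ i ∈ (Finset.univ : Finset (Fin n)),
          δ (c i.castSucc) (c i.succ) = 0 :=
        (Finset.sum_eq_zero_iff_of_nonneg fun i _ => hδ_nonneg _ _).1 hsum.symm
      have hconst : ∀ i : Fin (n+1), c 0 = c i := by
        intro i
        induction i using Fin.induction with
        | zero => rfl
        | succ j ihj => rw [ihj, hδ_zero _ _ (hall j (Finset.mem_univ j))]
      rw [← hc0, ← hcl, ← hconst (Fin.last n)]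
    · rintro rfl; exact hΔ_refl P
  exact ⟨hΔ_nonneg, hΔ_symm, hΔ_tri, hΔ_eq⟩
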